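/- arXiv:0910.1389 — 3 statements merged into one kernel-verified Lean document; each statement's English description precedes it below -/
import Mathlib

section
/- Let $v = (v_j)_{j \in \mathbb{Z}\setminus\{0\}}$ be a square-summable complex sequence with $v_{-j} = \overline{v_j}$ for all $j$. For each nonzero integer $k$, the resonant sum $\sum^{\mathrm{res}} v_{k_1} v_{k_2} v_{k_3} / k_1$, taken over all triples $(k_1,k_2,k_3)$ of nonzero integers with $k_1+k_2+k_3 = k$ and $(k_1+k_2)(k_2+k_3)(k_3+k_1) = 0$, equals $\frac{v_k}{k}\left(\sum_{j \in \mathbb{Z}\setminus\{0\}} |v_j|^2 - |v_k|^2\right)$. -/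
open Complex

lemma ind_aux (k a b c : ℤ) (hk : k ≠ 0) (T1 : ℂ) :
    (if a + b + c = k ∧ a ≠ 0 ∧ b ≠ 0 ∧ c ≠ 0 ∧ (a + b) * (b + c) * (c + a) = 0 then T1 else 0) =
      ((if a + b = 0 ∧ c = k ∧ a ≠ 0 then T1 else 0) +
        (if b + c = 0 ∧ a = k ∧ b ≠ 0 then T1 else 0) +
        (if c + a = 0 ∧ b = k ∧ a ≠ 0 then T1 else 0)) -
      ((if a = k ∧ b = -k ∧ c = k then T1 else 0) +
        (if a = k ∧ b = k ∧ c = -k then T1 else 0) +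
        (if a = -k ∧ b = k ∧ c = k then T1 else 0)) := by
  have hP : (a + b + c = k ∧ a ≠ 0 ∧ b ≠ 0 ∧ c ≠ 0 ∧ (a + b) * (b + c) * (c + a) = 0) ↔
      ((a + b = 0 ∧ c = k ∧ a ≠ 0) ∨ (b + c = 0 ∧ a = k ∧ b ≠ 0) ∨
        (c + a = 0 ∧ b = k ∧ a ≠ 0)) := by
    rw [mul_eq_zero, mul_eq_zero]
    omega
  rw [if_congr hP rfl rfl]
  by_cases h1 : a + b = 0 ∧ c = k ∧ a ≠ 0 <;>
    by_cases h2 : b + c = 0 ∧ a = k ∧ b ≠ 0 <;>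
    by_cases h3 : c + a = 0 ∧ b = k ∧ a ≠ 0
  · exfalso; omega
  · rw [if_pos (Or.inl h1), if_pos h1, if_pos h2, if_neg h3,
      if_pos (show a = k ∧ b = -k ∧ c = k by omega),
      if_neg (show ¬(a = k ∧ b = k ∧ c = -k) by omega),
      if_neg (show ¬(a = -k ∧ b = k ∧ c = k) by omega)]
    ring
  · rw [if_pos (Or.inl h1), if_pos h1, if_neg h2, if_pos h3,
      if_neg (show ¬(a = k ∧ b = -k ∧ c = k) by omega),
      if_neg (show ¬(a = k ∧ b = k ∧ c = -k) by omega),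
      if_pos (show a = -k ∧ b = k ∧ c = k by omega)]
    ring
  · rw [if_pos (Or.inl h1), if_pos h1, if_neg h2, if_neg h3,
      if_neg (show ¬(a = k ∧ b = -k ∧ c = k) by omega),
      if_neg (show ¬(a = k ∧ b = k ∧ c = -k) by omega),
      if_neg (show ¬(a = -k ∧ b = k ∧ c = k) by omega)]
    ring
  · rw [if_pos (Or.inr (Or.inl h2)), if_neg h1, if_pos h2, if_pos h3,
      if_neg (show ¬(a = k ∧ b = -k ∧ c = k) by omega),
      if_pos (show a = k ∧ b = k ∧ c = -k by omega),
      if_neg (show ¬(a = -k ∧ b = k ∧ c = k) by omega)]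
    ring
  · rw [if_pos (Or.inr (Or.inl h2)), if_neg h1, if_pos h2, if_neg h3,
      if_neg (show ¬(a = k ∧ b = -k ∧ c = k) by omega),
      if_neg (show ¬(a = k ∧ b = k ∧ c = -k) by omega),
      if_neg (show ¬(a = -k ∧ b = k ∧ c = k) by omega)]
    ring
  · rw [if_pos (Or.inr (Or.inr h3)), if_neg h1, if_neg h2, if_pos h3,
      if_neg (show ¬(a = k ∧ b = -k ∧ c = k) by omega),
      if_neg (show ¬(a = k ∧ b = k ∧ c = -k) by omega),
      if_neg (show ¬(a = -k ∧ b = k ∧ c = k) by omega)]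
    ring
  · rw [if_neg (show ¬_ by tauto), if_neg h1, if_neg h2, if_neg h3,
      if_neg (show ¬(a = k ∧ b = -k ∧ c = k) by omega),
      if_neg (show ¬(a = k ∧ b = k ∧ c = -k) by omega),
      if_neg (show ¬(a = -k ∧ b = k ∧ c = k) by omega)]
    ring

set_option maxHeartbeats 1000000 in
theorem resonant_sum_eval (v : ℤ → ℂ) (hv0 : v 0 = 0)
    (hsq : Summable fun j : ℤ => ‖v j‖ ^ 2)
    (hconj : ∀ j : ℤ, v (-j) = starRingEnd ℂ (v j))
    (k : ℤ) (hk : k ≠ 0) :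
    (∑' p : ℤ × ℤ × ℤ,
      if p.1 + p.2.1 + p.2.2 = k ∧ p.1 ≠ 0 ∧ p.2.1 ≠ 0 ∧ p.2.2 ≠ 0 ∧
          (p.1 + p.2.1) * (p.2.1 + p.2.2) * (p.2.2 + p.1) = 0 then
        v p.1 * v p.2.1 * v p.2.2 / (p.1 : ℂ)
      else 0) =
      v k / (k : ℂ) * (((∑' j : ℤ, ‖v j‖ ^ 2) - ‖v k‖ ^ 2 : ℝ) : ℂ) := by
  classical
  have hnorm : ∀ j : ℤ, v j * v (-j) = ((‖v j‖ ^ 2 : ℝ) : ℂ) := by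
    intro j
    rw [hconj, Complex.mul_conj]; norm_cast
    rw [Complex.normSq_eq_norm_sq]
  have hnormneg : ∀ j : ℤ, ‖v (-j)‖ = ‖v j‖ := by intro j; rw [hconj]; simp
  -- the six pieces
  set T : ℤ × ℤ × ℤ → ℂ := fun p => v p.1 * v p.2.1 * v p.2.2 / (p.1 : ℂ) with hT
  set fA : ℤ × ℤ × ℤ → ℂ :=
    fun p => if p.1 + p.2.1 = 0 ∧ p.2.2 = k ∧ p.1 ≠ 0 then T p else 0 with hfA
  set fB : ℤ × ℤ × ℤ → ℂ :=
    fun p => if p.2.1 + p.2.2 = 0 ∧ p.1 = k ∧ p.2.1 ≠ 0 then T p else 0 with hfB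
  set fC : ℤ × ℤ × ℤ → ℂ :=
    fun p => if p.2.2 + p.1 = 0 ∧ p.2.1 = k ∧ p.1 ≠ 0 then T p else 0 with hfC
  set g1 : ℤ × ℤ × ℤ → ℂ :=
    fun p => if p = ((k, -k, k) : ℤ × ℤ × ℤ) then T p else 0 with hg1
  set g2 : ℤ × ℤ × ℤ → ℂ :=
    fun p => if p = ((k, k, -k) : ℤ × ℤ × ℤ) then T p else 0 with hg2
  set g3 : ℤ × ℤ × ℤ → ℂ :=
    fun p => if p = ((-k, k, k) : ℤ × ℤ × ℤ) then T p else 0 with hg3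
  -- pointwise decomposition
  have hdecomp : ∀ p : ℤ × ℤ × ℤ,
      (if p.1 + p.2.1 + p.2.2 = k ∧ p.1 ≠ 0 ∧ p.2.1 ≠ 0 ∧ p.2.2 ≠ 0 ∧
          (p.1 + p.2.1) * (p.2.1 + p.2.2) * (p.2.2 + p.1) = 0 then
        v p.1 * v p.2.1 * v p.2.2 / (p.1 : ℂ) else 0)
      = fA p + fB p + fC p - (g1 p + g2 p + g3 p) := by
    rintro ⟨a, b, c⟩
    simp only [hfA, hfB, hfC, hg1, hg2, hg3, hT, Prod.mk.injEq]
    exact ind_aux k a b c hk _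
  rw [tsum_congr hdecomp]
  -- the odd function whose sum vanishes
  set g : ℤ → ℂ := fun j => ((‖v j‖ ^ 2 : ℝ) : ℂ) * v k / (j : ℂ) with hg
  have hgsum : Summable g := by
    apply Summable.of_norm_bounded (g := fun j => ‖v j‖ ^ 2 * ‖v k‖) (hsq.mul_right _)
    intro j
    rcases eq_or_ne j 0 with rfl | hj
    · simp [hg, hv0]
    · have h1 : (1 : ℝ) ≤ ‖(j : ℂ)‖ := by
        rw [Complex.norm_intCast]
        exact_mod_cast Int.one_le_abs hj
      rw [hg]
      rw [norm_div, norm_mul, Complex.norm_real, Real.norm_of_nonneg (by positivity)]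
      have hpos : (0 : ℝ) < ‖(j : ℂ)‖ := lt_of_lt_of_le one_pos h1
      rw [div_le_iff₀ hpos]
      nth_rewrite 1 [← mul_one (‖v j‖ ^ 2 * ‖v k‖)]
      exact mul_le_mul_of_nonneg_left h1 (by positivity)
  have hgodd : ∀ j : ℤ, g (-j) = -g j := by
    intro j
    simp only [hg, hnormneg, Int.cast_neg, div_neg, neg_div]
  have hgzero : ∑' j, g j = 0 := by
    have h1 : ∑' j, g (-j) = ∑' j, g j := (Equiv.neg ℤ).tsum_eq g
    have h2 : ∑' j, g (-j) = -∑' j, g j := by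
      simp_rw [hgodd]; exact tsum_neg
    have h3 : (2 : ℂ) * ∑' j, g j = 0 := by rw [two_mul]; nth_rewrite 1 [← h1, h2]; ring
    have := mul_eq_zero.1 h3
    simpa using this
  -- piece A
  have heA : Function.Injective (fun j : ℤ => ((j, -j, k) : ℤ × ℤ × ℤ)) := by
    intro a b hab; simpa using congrArg Prod.fst hab
  have hA_comp : (fun j : ℤ => fA (j, -j, k)) = g := by
    funext j
    simp only [hfA, hT, hg]
    rcases eq_or_ne j 0 with rfl | hj
    · simp [hv0]
    · rw [if_pos ⟨by ring, by trivial, hj⟩]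
      rw [show v j * v (-j) * v k = v j * v (-j) * v k by ring, hnorm j]
  have hA_supp : Function.support fA ⊆ Set.range (fun j : ℤ => ((j, -j, k) : ℤ × ℤ × ℤ)) := by
    rintro ⟨a, b, c⟩ hp
    simp only [hfA, Function.mem_support, ne_eq, ite_eq_right_iff, not_forall] at hp
    obtain ⟨⟨h1, h2, h3⟩, -⟩ := hp
    exact ⟨a, by simp [Prod.ext_iff]; omega⟩
  have hA_sum : Summable fA := by
    rw [← Function.Injective.summable_iff heA (fun x hx => by
      by_contra h; exact hx (hA_supp h))]
    show Summable (fA ∘ _)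
    convert hgsum using 1
    exact hA_comp
  have hA_tsum : ∑' p, fA p = 0 := by
    rw [← Function.Injective.tsum_eq heA hA_supp]
    calc ∑' j, fA (j, -j, k) = ∑' j, g j := by rw [show (fun j : ℤ => fA (j, -j, k)) = g from hA_comp]
      _ = 0 := hgzero
  -- piece C
  have heC : Function.Injective (fun j : ℤ => ((j, k, -j) : ℤ × ℤ × ℤ)) := by
    intro a b hab; simpa using congrArg Prod.fst hab
  have hC_comp : (fun j : ℤ => fC (j, k, -j)) = g := by
    funext j
    simp only [hfC, hT, hg]
    rcases eq_or_ne j 0 with rfl | hj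
    · simp [hv0]
    · rw [if_pos ⟨by ring, by trivial, hj⟩]
      rw [show v j * v k * v (-j) = v j * v (-j) * v k by ring, hnorm j]
  have hC_supp : Function.support fC ⊆ Set.range (fun j : ℤ => ((j, k, -j) : ℤ × ℤ × ℤ)) := by
    rintro ⟨a, b, c⟩ hp
    simp only [hfC, Function.mem_support, ne_eq, ite_eq_right_iff, not_forall] at hp
    obtain ⟨⟨h1, h2, h3⟩, -⟩ := hp
    exact ⟨a, by simp [Prod.ext_iff]; omega⟩
  have hC_sum : Summable fC := by
    rw [← Function.Injective.summable_iff heC (fun x hx => by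
      by_contra h; exact hx (hC_supp h))]
    show Summable (fC ∘ _)
    convert hgsum using 1
    exact hC_comp
  have hC_tsum : ∑' p, fC p = 0 := by
    rw [← Function.Injective.tsum_eq heC hC_supp]
    calc ∑' j, fC (j, k, -j) = ∑' j, g j := by rw [show (fun j : ℤ => fC (j, k, -j)) = g from hC_comp]
      _ = 0 := hgzero
  -- piece B
  set h : ℤ → ℂ := fun j => v k / (k : ℂ) * ((‖v j‖ ^ 2 : ℝ) : ℂ) with hh
  have hhsum : Summable h := by
    apply Summable.mul_left
    exact (Complex.ofRealCLM : ℝ →L[ℝ] ℂ).summable hsq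
  have heB : Function.Injective (fun j : ℤ => ((k, j, -j) : ℤ × ℤ × ℤ)) := by
    intro a b hab; simpa using congrArg (fun p : ℤ × ℤ × ℤ => p.2.1) hab
  have hB_comp : (fun j : ℤ => fB (k, j, -j)) = h := by
    funext j
    simp only [hfB, hT, hh]
    rcases eq_or_ne j 0 with rfl | hj
    · simp [hv0]
    · rw [if_pos ⟨by ring, by trivial, hj⟩]
      rw [show v k * v j * v (-j) = v j * v (-j) * v k by ring, hnorm j]
      ring
  have hB_supp : Function.support fB ⊆ Set.range (fun j : ℤ => ((k, j, -j) : ℤ × ℤ × ℤ)) := by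
    rintro ⟨a, b, c⟩ hp
    simp only [hfB, Function.mem_support, ne_eq, ite_eq_right_iff, not_forall] at hp
    obtain ⟨⟨h1, h2, h3⟩, -⟩ := hp
    exact ⟨b, by simp [Prod.ext_iff]; omega⟩
  have hB_sum : Summable fB := by
    rw [← Function.Injective.summable_iff heB (fun x hx => by
      by_contra hcon; exact hx (hB_supp hcon))]
    show Summable (fB ∘ _)
    convert hhsum using 1
    exact hB_comp
  have hB_tsum : ∑' p, fB p = v k / (k : ℂ) * ((∑' j : ℤ, ‖v j‖ ^ 2 : ℝ) : ℂ) := by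
    rw [← Function.Injective.tsum_eq heB hB_supp]
    rw [show (fun j : ℤ => fB (k, j, -j)) = h from hB_comp]
    rw [hh, tsum_mul_left]
    congr 1
    exact ((Complex.ofRealCLM : ℝ →L[ℝ] ℂ).map_tsum hsq).symm
  -- point masses
  have hpt : ∀ pt : ℤ × ℤ × ℤ, (fun p : ℤ × ℤ × ℤ => if p = pt then T p else 0) =
      (fun p : ℤ × ℤ × ℤ => if p = pt then T pt else 0) := by
    intro pt; funext p; split_ifs with h
    · rw [h]
    · rfl
  have hg1_sum : Summable g1 := by rw [hg1, hpt]; exact (hasSum_ite_eq _ _).summable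
  have hg2_sum : Summable g2 := by rw [hg2, hpt]; exact (hasSum_ite_eq _ _).summable
  have hg3_sum : Summable g3 := by rw [hg3, hpt]; exact (hasSum_ite_eq _ _).summable
  have hg1_tsum : ∑' p, g1 p = T (k, -k, k) := by rw [hg1, hpt]; exact tsum_ite_eq _ _
  have hg2_tsum : ∑' p, g2 p = T (k, k, -k) := by rw [hg2, hpt]; exact tsum_ite_eq _ _
  have hg3_tsum : ∑' p, g3 p = T (-k, k, k) := by rw [hg3, hpt]; exact tsum_ite_eq _ _
  -- assemble
  rw [Summable.tsum_sub (((hA_sum.add hB_sum).add hC_sum)) ((hg1_sum.add hg2_sum).add hg3_sum)]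
  rw [Summable.tsum_add (hA_sum.add hB_sum) hC_sum, Summable.tsum_add hA_sum hB_sum]
  rw [Summable.tsum_add (hg1_sum.add hg2_sum) hg3_sum, Summable.tsum_add hg1_sum hg2_sum]
  rw [hA_tsum, hB_tsum, hC_tsum, hg1_tsum, hg2_tsum, hg3_tsum]
  have hvk : v k * v (-k) = ((‖v k‖ ^ 2 : ℝ) : ℂ) := hnorm k
  have hkC : (k : ℂ) ≠ 0 := Int.cast_ne_zero.mpr hk
  have hT1 : T (k, -k, k) = ((‖v k‖ ^ 2 : ℝ) : ℂ) * v k / (k : ℂ) := by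
    simp only [hT]
    rw [show v k * v (-k) * v k = (v k * v (-k)) * v k by ring, hvk]
  have hT2 : T (k, k, -k) = ((‖v k‖ ^ 2 : ℝ) : ℂ) * v k / (k : ℂ) := by
    simp only [hT]
    rw [show v k * v k * v (-k) = (v k * v (-k)) * v k by ring, hvk]
  have hT3 : T (-k, k, k) = -(((‖v k‖ ^ 2 : ℝ) : ℂ) * v k / (k : ℂ)) := by
    simp only [hT]
    rw [show v (-k) * v k * v k = (v k * v (-k)) * v k by ring, hvk]
    push_cast
    rw [div_neg]
  rw [hT1, hT2, hT3]
  push_cast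
  field_simp
  ring
end

section
/- For $\theta > 3/2$ the bilinear operator $B_1$ defined on pairs of sequences $u, v \in \ell^2(\mathbb{Z}\setminus\{0\})$ by $B_1(u,v)_k = \frac{1}{2} i k \sum_{k_1+k_2=k} e^{i 3 k k_1 k_2 t} u_{k_1} v_{k_2}$ (sum over nonzero $k_1, k_2$) satisfies $\|B_1(u,v)\|_{\dot H^{-\theta}} \leq c_1(\theta) \|u\|_{\dot H^0} \|v\|_{\dot H^0}$, where $c_1(\theta) = \frac{1}{2}\left(\sum_{k \neq 0} |k|^{-2(\theta-1)}\right)^{1/2}$. -/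
open Complex

/-- Homogeneous Sobolev norm of a sequence indexed by `ℤ` (modes; mode `0` is assumed zero). -/
noncomputable def hnorm (s : ℝ) (u : ℤ → ℂ) : ℝ :=
  (∑' k : ℤ, |(k : ℝ)| ^ (2 * s) * ‖u k‖ ^ 2) ^ ((1 : ℝ) / 2)

/-- The bilinear operator `B₁` of the KdV equation in oscillating variables. -/
noncomputable def B1 (t : ℝ) (u v : ℤ → ℂ) (k : ℤ) : ℂ :=
  (1 / 2) * Complex.I * (k : ℂ) *
    ∑' k1 : ℤ, Complex.exp (Complex.I * (3 * (k : ℂ) * (k1 : ℂ) * ((k : ℂ) - (k1 : ℂ)) * (t : ℂ)))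
      * u k1 * v (k - k1)

open Real in
/-- Cauchy–Schwarz for tsums over ℤ. -/
lemma tsum_CS {f g : ℤ → ℝ} (hf : ∀ n, 0 ≤ f n) (hg : ∀ n, 0 ≤ g n)
    (hf2 : Summable fun n => f n ^ 2) (hg2 : Summable fun n => g n ^ 2) :
    ∑' n, f n * g n ≤ √(∑' n, f n ^ 2) * √(∑' n, g n ^ 2) := by
  have hsum : Summable fun n => f n * g n := by
    apply Summable.of_nonneg_of_le (fun n => mul_nonneg (hf n) (hg n))
      (fun n => ?_) ((hf2.add hg2).div_const 2)
    nlinarith [sq_nonneg (f n - g n)]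
  refine Summable.tsum_le_of_sum_le hsum fun s => ?_
  calc ∑ i ∈ s, f i * g i ≤ √(∑ i ∈ s, f i ^ 2) * √(∑ i ∈ s, g i ^ 2) :=
        Real.sum_mul_le_sqrt_mul_sqrt s f g
    _ ≤ _ := by
        gcongr
        · exact Summable.sum_le_tsum s (fun i _ => sq_nonneg _) hf2
        · exact Summable.sum_le_tsum s (fun i _ => sq_nonneg _) hg2

theorem B1_bound (θ : ℝ) (hθ : 3 / 2 < θ) (t : ℝ) (u v : ℤ → ℂ)
    (hu0 : u 0 = 0) (hv0 : v 0 = 0)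
    (hu : Summable fun k : ℤ => ‖u k‖ ^ 2) (hv : Summable fun k : ℤ => ‖v k‖ ^ 2) :
    hnorm (-θ) (B1 t u v) ≤
      (1 / 2) * (∑' k : ℤ, |(k : ℝ)| ^ (-2 * (θ - 1))) ^ ((1 : ℝ) / 2) *
        hnorm 0 u * hnorm 0 v := by
  classical
  set A := ∑' k : ℤ, ‖u k‖ ^ 2 with hA
  set B := ∑' k : ℤ, ‖v k‖ ^ 2 with hB
  set C := ∑' k : ℤ, |(k : ℝ)| ^ (-2 * (θ - 1)) with hC
  have hA0 : 0 ≤ A := tsum_nonneg fun _ => sq_nonneg _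
  have hB0 : 0 ≤ B := tsum_nonneg fun _ => sq_nonneg _
  have hC0 : 0 ≤ C := tsum_nonneg fun _ => Real.rpow_nonneg (abs_nonneg _) _
  have hvshift : ∀ k : ℤ, Summable fun k1 : ℤ => ‖v (k - k1)‖ ^ 2 := fun k =>
    ((Equiv.subLeft k).summable_iff (f := fun j : ℤ => ‖v j‖ ^ 2)).mpr hv
  have hvsum : ∀ k : ℤ, (∑' k1 : ℤ, ‖v (k - k1)‖ ^ 2) = B := fun k =>
    (Equiv.subLeft k).tsum_eq (fun j : ℤ => ‖v j‖ ^ 2)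
  -- pointwise bound on ‖B1‖
  have key : ∀ k : ℤ, ‖B1 t u v k‖ ≤ 1 / 2 * |(k : ℝ)| * (Real.sqrt A * Real.sqrt B) := by
    intro k
    have hnt : ∀ k1 : ℤ,
        ‖Complex.exp (Complex.I * (3 * (k : ℂ) * (k1 : ℂ) * ((k : ℂ) - (k1 : ℂ)) * (t : ℂ)))
          * u k1 * v (k - k1)‖ = ‖u k1‖ * ‖v (k - k1)‖ := by
      intro k1
      rw [norm_mul, norm_mul]
      have harg : Complex.I * (3 * (k : ℂ) * (k1 : ℂ) * ((k : ℂ) - (k1 : ℂ)) * (t : ℂ))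
          = ((3 * (k : ℝ) * (k1 : ℝ) * ((k : ℝ) - (k1 : ℝ)) * t : ℝ) : ℂ) * Complex.I := by
        push_cast; ring
      rw [harg]
      rw [Complex.norm_exp_ofReal_mul_I, one_mul]
    have hsum2 : Summable fun k1 : ℤ => ‖u k1‖ * ‖v (k - k1)‖ := by
      apply Summable.of_nonneg_of_le (fun n => mul_nonneg (norm_nonneg _) (norm_nonneg _))
        (fun n => ?_) ((hu.add (hvshift k)).div_const 2)
      nlinarith [sq_nonneg (‖u n‖ - ‖v (k - n)‖)]
    have hsum3 : Summable fun k1 : ℤ =>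
        ‖Complex.exp (Complex.I * (3 * (k : ℂ) * (k1 : ℂ) * ((k : ℂ) - (k1 : ℂ)) * (t : ℂ)))
          * u k1 * v (k - k1)‖ := by
      exact hsum2.congr fun k1 => (hnt k1).symm
    have h1 : ‖B1 t u v k‖ ≤ 1 / 2 * |(k : ℝ)| * ∑' k1 : ℤ, ‖u k1‖ * ‖v (k - k1)‖ := by
      rw [B1, norm_mul]
      have hc : ‖(1 / 2 : ℂ) * Complex.I * (k : ℂ)‖ = 1 / 2 * |(k : ℝ)| := by
        simp [norm_mul, Complex.norm_intCast, abs_of_nonneg]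
      rw [hc]
      gcongr
      calc ‖∑' k1 : ℤ, Complex.exp (Complex.I * (3 * (k : ℂ) * (k1 : ℂ) * ((k : ℂ) - (k1 : ℂ)) * (t : ℂ)))
              * u k1 * v (k - k1)‖ ≤ ∑' k1 : ℤ,
              ‖Complex.exp (Complex.I * (3 * (k : ℂ) * (k1 : ℂ) * ((k : ℂ) - (k1 : ℂ)) * (t : ℂ)))
              * u k1 * v (k - k1)‖ := norm_tsum_le_tsum_norm hsum3
          _ = ∑' k1 : ℤ, ‖u k1‖ * ‖v (k - k1)‖ := tsum_congr hnt
    refine h1.trans ?_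
    gcongr
    calc (∑' k1 : ℤ, ‖u k1‖ * ‖v (k - k1)‖)
        ≤ Real.sqrt (∑' k1 : ℤ, ‖u k1‖ ^ 2) * Real.sqrt (∑' k1 : ℤ, ‖v (k - k1)‖ ^ 2) :=
          tsum_CS (fun _ => norm_nonneg _) (fun _ => norm_nonneg _) hu (hvshift k)
      _ = Real.sqrt A * Real.sqrt B := by rw [hvsum k]
  -- summability of the dominating series
  have hCsum : Summable fun k : ℤ => |(k : ℝ)| ^ (-2 * (θ - 1)) := by
    have := Real.summable_abs_int_rpow (b := 2 * (θ - 1)) (by linarith)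
    simpa [neg_mul] using this
  have hg : Summable fun k : ℤ => A * B / 4 * |(k : ℝ)| ^ (-2 * (θ - 1)) :=
    hCsum.mul_left _
  -- pointwise bound on the summands
  have hpt : ∀ k : ℤ, |(k : ℝ)| ^ (2 * (-θ)) * ‖B1 t u v k‖ ^ 2 ≤
      A * B / 4 * |(k : ℝ)| ^ (-2 * (θ - 1)) := by
    intro k
    rcases eq_or_ne k 0 with rfl | hk
    · have e1 : |((0 : ℤ) : ℝ)| = 0 := by simp
      rw [e1, Real.zero_rpow (by intro h; nlinarith : 2 * (-θ) ≠ 0),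
        Real.zero_rpow (by intro h; nlinarith : -2 * (θ - 1) ≠ 0), zero_mul, mul_zero]
    · have hkpos : (0 : ℝ) < |(k : ℝ)| := by
        have : (k : ℝ) ≠ 0 := Int.cast_ne_zero.mpr hk
        positivity
      have h2 : ‖B1 t u v k‖ ^ 2 ≤ (1 / 2 * |(k : ℝ)| * (Real.sqrt A * Real.sqrt B)) ^ 2 := by
        apply pow_le_pow_left₀ (norm_nonneg _) (key k)
      calc |(k : ℝ)| ^ (2 * (-θ)) * ‖B1 t u v k‖ ^ 2
          ≤ |(k : ℝ)| ^ (2 * (-θ)) * (1 / 2 * |(k : ℝ)| * (Real.sqrt A * Real.sqrt B)) ^ 2 := by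
            gcongr
        _ = A * B / 4 * (|(k : ℝ)| ^ (2 * (-θ)) * |(k : ℝ)| ^ (2 : ℕ)) := by
            rw [mul_pow, mul_pow, mul_pow, Real.sq_sqrt hA0, Real.sq_sqrt hB0]
            ring
        _ = A * B / 4 * |(k : ℝ)| ^ (-2 * (θ - 1)) := by
            rw [← Real.rpow_natCast |(k : ℝ)| 2, ← Real.rpow_add hkpos]
            congr 1
            push_cast
            ring
  have hfsum : Summable fun k : ℤ => |(k : ℝ)| ^ (2 * (-θ)) * ‖B1 t u v k‖ ^ 2 :=
    Summable.of_nonneg_of_le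
      (fun k => mul_nonneg (Real.rpow_nonneg (abs_nonneg _) _) (sq_nonneg _)) hpt hg
  have hmain : hnorm (-θ) (B1 t u v) ≤ (A * B / 4 * C) ^ ((1 : ℝ) / 2) := by
    rw [hnorm]
    apply Real.rpow_le_rpow (tsum_nonneg fun k =>
      mul_nonneg (Real.rpow_nonneg (abs_nonneg _) _) (sq_nonneg _)) ?_ (by norm_num)
    calc (∑' k : ℤ, |(k : ℝ)| ^ (2 * (-θ)) * ‖B1 t u v k‖ ^ 2)
        ≤ ∑' k : ℤ, A * B / 4 * |(k : ℝ)| ^ (-2 * (θ - 1)) := Summable.tsum_le_tsum hpt hfsum hg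
      _ = A * B / 4 * C := by rw [tsum_mul_left]
  have hnu : hnorm 0 u = A ^ ((1 : ℝ) / 2) := by
    rw [hnorm, hA]
    norm_num
  have hnv : hnorm 0 v = B ^ ((1 : ℝ) / 2) := by
    rw [hnorm, hB]
    norm_num
  rw [hnu, hnv]
  refine hmain.trans (le_of_eq ?_)
  rw [← Real.sqrt_eq_rpow, ← Real.sqrt_eq_rpow, ← Real.sqrt_eq_rpow, ← Real.sqrt_eq_rpow]
  rw [show A * B / 4 * C = C * A * B * (1 / 4) by ring]
  rw [Real.sqrt_mul (by positivity), Real.sqrt_mul (by positivity),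
    Real.sqrt_mul hC0, show (1 / 4 : ℝ) = (1 / 2) ^ 2 by norm_num,
    Real.sqrt_sq (by norm_num)]
  ring
end

section
/- For $s \geq 0$, the resonant operator $A_{\mathrm{res}}$ defined on sequences $v \in \dot H^0$ by $A_{\mathrm{res}}(v)_k = \frac{v_k}{k}\left(\|v\|_{\dot H^0}^2 - |v_k|^2\right)$ maps $\dot H^s$ into $\dot H^{s+1}$ with $\|A_{\mathrm{res}}(v)\|_{\dot H^{s+1}} \leq \|v\|_{\dot H^0}^2 \|v\|_{\dot H^s}$. -/
open Complex

/-- The resonant operator `A_res` of the KdV equation. -/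
noncomputable def Ares (v : ℤ → ℂ) (k : ℤ) : ℂ :=
  v k / (k : ℂ) * (((hnorm 0 v) ^ 2 - ‖v k‖ ^ 2 : ℝ) : ℂ)

theorem Ares_bound (s : ℝ) (hs : 0 ≤ s) (v : ℤ → ℂ) (hv0 : v 0 = 0)
    (hv2 : Summable fun k : ℤ => ‖v k‖ ^ 2)
    (hvs : Summable fun k : ℤ => |(k : ℝ)| ^ (2 * s) * ‖v k‖ ^ 2) :
    hnorm (s + 1) (Ares v) ≤ (hnorm 0 v) ^ 2 * hnorm s v := by
  set N2 := ∑' k : ℤ, ‖v k‖ ^ 2 with hN2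
  have hN2nonneg : 0 ≤ N2 := tsum_nonneg fun k => sq_nonneg _
  have h0 : hnorm 0 v ^ 2 = N2 := by
    rw [hnorm]
    simp only [mul_zero, Real.rpow_zero, one_mul]
    rw [← Real.sqrt_eq_rpow, Real.sq_sqrt hN2nonneg]
  have hterm : ∀ k : ℤ, ‖v k‖ ^ 2 ≤ N2 := fun k => Summable.le_tsum hv2 k (fun _ _ => sq_nonneg _)
  have key : ∀ k : ℤ, |(k : ℝ)| ^ (2 * (s + 1)) * ‖Ares v k‖ ^ 2 ≤
      N2 ^ 2 * (|(k : ℝ)| ^ (2 * s) * ‖v k‖ ^ 2) := by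
    intro k
    rcases eq_or_ne k 0 with rfl | hk
    · simp [Ares, hv0]
    · have hkpos : (0 : ℝ) < |(k : ℝ)| := by
        rw [abs_pos]
        exact_mod_cast hk
      have hA : ‖Ares v k‖ ^ 2 = ‖v k‖ ^ 2 / |(k : ℝ)| ^ 2 * (N2 - ‖v k‖ ^ 2) ^ 2 := by
        rw [Ares, norm_mul, norm_div, Complex.norm_intCast, Complex.norm_real, h0,
          Real.norm_eq_abs, mul_pow, div_pow, _root_.sq_abs, _root_.sq_abs]
      have hsplit : |(k : ℝ)| ^ (2 * (s + 1)) = |(k : ℝ)| ^ (2 * s) * |(k : ℝ)| ^ 2 := by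
        rw [mul_add, mul_one, Real.rpow_add hkpos, Real.rpow_two]
      rw [hA, hsplit]
      have hsq : (N2 - ‖v k‖ ^ 2) ^ 2 ≤ N2 ^ 2 := by
        apply sq_le_sq'
        · linarith [hterm k, hN2nonneg]
        · linarith [sq_nonneg ‖v k‖]
      have hk2 : (0 : ℝ) < |(k : ℝ)| ^ 2 := by positivity
      have : |(k : ℝ)| ^ (2 * s) * |(k : ℝ)| ^ 2 * (‖v k‖ ^ 2 / |(k : ℝ)| ^ 2 * (N2 - ‖v k‖ ^ 2) ^ 2)
          = |(k : ℝ)| ^ (2 * s) * ‖v k‖ ^ 2 * (N2 - ‖v k‖ ^ 2) ^ 2 := by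
        field_simp
      rw [this]
      have hbs : 0 ≤ |(k : ℝ)| ^ (2 * s) * ‖v k‖ ^ 2 := by positivity
      calc |(k : ℝ)| ^ (2 * s) * ‖v k‖ ^ 2 * (N2 - ‖v k‖ ^ 2) ^ 2
          ≤ |(k : ℝ)| ^ (2 * s) * ‖v k‖ ^ 2 * N2 ^ 2 := by
            exact mul_le_mul_of_nonneg_left hsq hbs
        _ = N2 ^ 2 * (|(k : ℝ)| ^ (2 * s) * ‖v k‖ ^ 2) := by ring
  have hb : Summable (fun k : ℤ => N2 ^ 2 * (|(k : ℝ)| ^ (2 * s) * ‖v k‖ ^ 2)) :=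
    hvs.mul_left _
  have ha : Summable (fun k : ℤ => |(k : ℝ)| ^ (2 * (s + 1)) * ‖Ares v k‖ ^ 2) :=
    Summable.of_nonneg_of_le (fun k => by positivity) key hb
  have hsum : (∑' k : ℤ, |(k : ℝ)| ^ (2 * (s + 1)) * ‖Ares v k‖ ^ 2)
      ≤ N2 ^ 2 * ∑' k : ℤ, |(k : ℝ)| ^ (2 * s) * ‖v k‖ ^ 2 := by
    calc (∑' k : ℤ, |(k : ℝ)| ^ (2 * (s + 1)) * ‖Ares v k‖ ^ 2)
        ≤ ∑' k : ℤ, N2 ^ 2 * (|(k : ℝ)| ^ (2 * s) * ‖v k‖ ^ 2) := Summable.tsum_le_tsum key ha hb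
      _ = N2 ^ 2 * ∑' k : ℤ, |(k : ℝ)| ^ (2 * s) * ‖v k‖ ^ 2 := tsum_mul_left
  have hbnn : 0 ≤ ∑' k : ℤ, |(k : ℝ)| ^ (2 * s) * ‖v k‖ ^ 2 :=
    tsum_nonneg fun k => by positivity
  rw [h0, hnorm, hnorm]
  calc (∑' k : ℤ, |(k : ℝ)| ^ (2 * (s + 1)) * ‖Ares v k‖ ^ 2) ^ ((1 : ℝ) / 2)
      ≤ (N2 ^ 2 * ∑' k : ℤ, |(k : ℝ)| ^ (2 * s) * ‖v k‖ ^ 2) ^ ((1 : ℝ) / 2) := by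
        apply Real.rpow_le_rpow (tsum_nonneg fun k => by positivity) hsum (by norm_num)
    _ = N2 * (∑' k : ℤ, |(k : ℝ)| ^ (2 * s) * ‖v k‖ ^ 2) ^ ((1 : ℝ) / 2) := by
        rw [Real.mul_rpow (sq_nonneg _) hbnn, ← Real.sqrt_eq_rpow,
          Real.sqrt_sq hN2nonneg]
end
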